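/- The metric space (Λ^0, d₀) is complete: every d₀-Cauchy sequence of continuous paths (possibly defined on different time intervals [0,r_n] ⊆ [0,T]) converges in d₀ to an element of Λ^0. -/

import Mathlib

open Set

noncomputable section

/-- The space `Λ^0 = ∪_{r∈[0,T]} C([0,r];ℝ^d)` of continuous paths with varying time
horizons, encoded as a sigma type. -/
def Lam0 (d : ℕ) (T : ℝ) :=
  Σ r : Set.Icc (0:ℝ) T, C(Set.Icc (0:ℝ) (r : ℝ), EuclideanSpace ℝ (Fin d))

/-- The horizontal extension of a path `x ∈ Λ_r^0` to `[0,T]`, freezing the value after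
time `r`: `(ext0 x)(s) = x(min r s)`. -/
def ext0 {d : ℕ} {T : ℝ} (x : Lam0 d T) :
    C(Set.Icc (0:ℝ) T, EuclideanSpace ℝ (Fin d)) :=
  x.2.comp ⟨fun s => ⟨min (x.1 : ℝ) (s : ℝ), ⟨le_min x.1.2.1 s.2.1, min_le_left _ _⟩⟩,
    Continuous.subtype_mk (continuous_const.min continuous_subtype_val) _⟩

/-- The metric `d₀(x_r, x̄_t) = √|t−r| + sup_{s∈[0,t]} ( |x_r(s)−x̄_t(s)|·1_{[0,r)}(s)
+ |x_r(r)−x̄_t(s)|·1_{[r,t]}(s) )` (for `r ≤ t`, and symmetrically for `r ≥ t`): the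
supremum part equals the sup-distance between the horizontal extensions. -/
def d0 {d : ℕ} {T : ℝ} (x y : Lam0 d T) : ℝ :=
  Real.sqrt |(y.1 : ℝ) - (x.1 : ℝ)| + dist (ext0 x) (ext0 y)


/-- the metric space `(Λ^0, d₀)` is complete: every `d₀`-Cauchy sequence of
continuous paths (possibly defined on different time intervals `[0,r_n] ⊆ [0,T]`)
converges in `d₀` to an element of `Λ^0`. -/
theorem stmt_2 (d : ℕ) (hd : 0 < d) (T : ℝ) (hT : 0 < T) :
    ∀ u : ℕ → Lam0 d T,
      (∀ ε > (0:ℝ), ∃ N : ℕ, ∀ m ≥ N, ∀ n ≥ N, d0 (u m) (u n) < ε) →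
      ∃ x : Lam0 d T, Filter.Tendsto (fun n => d0 (u n) x) Filter.atTop (nhds 0) := by
  intro u hu
  set rn : ℕ → ℝ := fun n => ((u n).1 : ℝ) with hrn
  set F : ℕ → C(Set.Icc (0:ℝ) T, EuclideanSpace ℝ (Fin d)) := fun n => ext0 (u n) with hFdef
  have hd0ge1 : ∀ m n, Real.sqrt |rn n - rn m| ≤ d0 (u m) (u n) := fun m n =>
    le_add_of_nonneg_right dist_nonneg
  have hd0ge2 : ∀ m n, dist (F m) (F n) ≤ d0 (u m) (u n) := fun m n =>
    le_add_of_nonneg_left (Real.sqrt_nonneg _)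
  -- the horizons form a Cauchy sequence in ℝ
  have hcr : CauchySeq rn := by
    rw [Metric.cauchySeq_iff]
    intro ε hε
    obtain ⟨N, hN⟩ := hu (Real.sqrt ε) (Real.sqrt_pos.mpr hε)
    refine ⟨N, fun m hm n hn => ?_⟩
    have h1 : Real.sqrt |rn n - rn m| < Real.sqrt ε :=
      (hd0ge1 m n).trans_lt (hN m hm n hn)
    have h2 : |rn n - rn m| < ε := by
      by_contra hcon
      exact absurd (Real.sqrt_le_sqrt (not_lt.mp hcon)) (not_le.mpr h1)
    rw [Real.dist_eq, abs_sub_comm]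
    exact h2
  -- the extended paths form a Cauchy sequence in C([0,T], ℝ^d)
  have hcF : CauchySeq F := by
    rw [Metric.cauchySeq_iff]
    intro ε hε
    obtain ⟨N, hN⟩ := hu ε hε
    exact ⟨N, fun m hm n hn => (hd0ge2 m n).trans_lt (hN m hm n hn)⟩
  obtain ⟨r, hr⟩ := cauchySeq_tendsto_of_complete hcr
  obtain ⟨g, hg⟩ := cauchySeq_tendsto_of_complete hcF
  have hrmem : r ∈ Set.Icc (0:ℝ) T :=
    isClosed_Icc.mem_of_tendsto hr (Filter.Eventually.of_forall fun n => (u n).1.2)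
  have hFg : Filter.Tendsto (fun n => dist (F n) g) Filter.atTop (nhds 0) :=
    tendsto_iff_dist_tendsto_zero.mp hg
  set πr : Set.Icc (0:ℝ) T := ⟨r, hrmem⟩ with hπr
  -- g is constant after time r
  have hconst : ∀ s : Set.Icc (0:ℝ) T, r ≤ (s : ℝ) → g s = g πr := by
    intro s hs
    have haN : ∀ n, min (rn n) (s : ℝ) ∈ Set.Icc (0:ℝ) T := fun n =>
      ⟨le_min (u n).1.2.1 s.2.1, (min_le_right _ _).trans s.2.2⟩
    have hbN : ∀ n, min (rn n) r ∈ Set.Icc (0:ℝ) T := fun n =>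
      ⟨le_min (u n).1.2.1 hrmem.1, (min_le_left _ _).trans (u n).1.2.2⟩
    set aN : ℕ → Set.Icc (0:ℝ) T := fun n => ⟨min (rn n) (s : ℝ), haN n⟩ with haNdef
    set bN : ℕ → Set.Icc (0:ℝ) T := fun n => ⟨min (rn n) r, hbN n⟩ with hbNdef
    -- frozen-path identities
    have hida : ∀ n, F n s = F n (aN n) := by
      intro n
      show (u n).2 _ = (u n).2 _
      congr 1
      exact Subtype.ext (min_eq_right (min_le_left (rn n) (s : ℝ))).symm
    have hidb : ∀ n, F n πr = F n (bN n) := by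
      intro n
      show (u n).2 _ = (u n).2 _
      congr 1
      exact Subtype.ext (min_eq_right (min_le_left (rn n) r)).symm
    have hptw : ∀ (n : ℕ) (z : Set.Icc (0:ℝ) T), dist (F n z) (g z) ≤ dist (F n) g :=
      fun n z => ContinuousMap.dist_apply_le_dist z
    -- the key bound
    have hbound : ∀ n, dist (g s) (g πr) ≤
        4 * dist (F n) g + dist (g (aN n)) (g (bN n)) := by
      intro n
      have t1 : dist (g s) (g πr) ≤
          dist (g s) (F n s) + dist (F n s) (F n πr) + dist (F n πr) (g πr) :=
        dist_triangle4 _ _ _ _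
      have t2 : dist (F n s) (F n πr) ≤
          dist (F n (aN n)) (g (aN n)) + dist (g (aN n)) (g (bN n)) +
            dist (g (bN n)) (F n (bN n)) := by
        rw [hida n, hidb n]; exact dist_triangle4 _ _ _ _
      have e1 : dist (g s) (F n s) ≤ dist (F n) g := by
        rw [dist_comm]; exact hptw n s
      have e2 : dist (F n πr) (g πr) ≤ dist (F n) g := hptw n πr
      have e3 : dist (F n (aN n)) (g (aN n)) ≤ dist (F n) g := hptw n (aN n)
      have e4 : dist (g (bN n)) (F n (bN n)) ≤ dist (F n) g := by
        rw [dist_comm]; exact hptw n (bN n)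
      nlinarith [t1, t2, e1, e2, e3, e4]
    -- the bound tends to 0
    have haNlim : Filter.Tendsto aN Filter.atTop (nhds πr) := by
      rw [tendsto_subtype_rng]
      have : Filter.Tendsto (fun n => min (rn n) (s : ℝ)) Filter.atTop
          (nhds (min r (s : ℝ))) := hr.min tendsto_const_nhds
      rwa [min_eq_left hs] at this
    have hbNlim : Filter.Tendsto bN Filter.atTop (nhds πr) := by
      rw [tendsto_subtype_rng]
      have : Filter.Tendsto (fun n => min (rn n) r) Filter.atTop
          (nhds (min r r)) := hr.min tendsto_const_nhds
      rwa [min_self] at this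
    have hgdist : Filter.Tendsto (fun n => dist (g (aN n)) (g (bN n))) Filter.atTop
        (nhds 0) := by
      have := (((g.continuous.tendsto πr).comp haNlim).dist
        ((g.continuous.tendsto πr).comp hbNlim))
      simpa using this
    have hD : Filter.Tendsto (fun n => 4 * dist (F n) g + dist (g (aN n)) (g (bN n)))
        Filter.atTop (nhds 0) := by
      have := (hFg.const_mul 4).add hgdist
      simpa using this
    have hle : dist (g s) (g πr) ≤ 0 := ge_of_tendsto' hD hbound
    exact dist_eq_zero.mp (le_antisymm hle dist_nonneg)
  -- build the limit element
  set ι : C(Set.Icc (0:ℝ) r, Set.Icc (0:ℝ) T) :=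
    ⟨fun t => ⟨(t : ℝ), ⟨t.2.1, t.2.2.trans hrmem.2⟩⟩,
      Continuous.subtype_mk continuous_subtype_val _⟩ with hι
  set x : Lam0 d T := ⟨⟨r, hrmem⟩, g.comp ι⟩ with hx
  have hext : ext0 x = g := by
    apply ContinuousMap.ext
    intro s
    show g (ι ⟨min r (s : ℝ), ⟨le_min hrmem.1 s.2.1, min_le_left _ _⟩⟩) = g s
    rcases le_total r (s : ℝ) with h | h
    · have h1 : (ι ⟨min r (s : ℝ), ⟨le_min hrmem.1 s.2.1, min_le_left _ _⟩⟩) = πr :=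
        Subtype.ext (min_eq_left h)
      rw [h1, ← hconst s h]
    · have h1 : (ι ⟨min r (s : ℝ), ⟨le_min hrmem.1 s.2.1, min_le_left _ _⟩⟩) = s :=
        Subtype.ext (min_eq_right h)
      rw [h1]
  refine ⟨x, ?_⟩
  have hsqrt : Filter.Tendsto (fun n => Real.sqrt |r - rn n|) Filter.atTop (nhds 0) := by
    have h1 : Filter.Tendsto (fun n => r - rn n) Filter.atTop (nhds 0) := by
      simpa using hr.const_sub r
    have h2 : Filter.Tendsto (fun n => |r - rn n|) Filter.atTop (nhds 0) := by
      simpa using h1.abs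
    have h3 := (Real.continuous_sqrt.tendsto 0).comp h2
    simpa [Function.comp_def] using h3
  have hdx : Filter.Tendsto (fun n => dist (F n) (ext0 x)) Filter.atTop (nhds 0) := by
    rw [hext]; exact hFg
  have := hsqrt.add hdx
  simpa [d0] using this
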